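/- Let A and C be bases of a matroid M on a linearly ordered set E, and suppose B = (C \ {c}) ∪ {b} is a basis with b ≠ c, B ≤_{ext/int} C, c ∈ EP(B), and EA(C) ⊆ EA(B) ∪ {b}. Then IA(C) ⊆ IA(B). -/

import Mathlib

open Set

variable {α : Type*}

/-- A circuit of a matroid: a minimal dependent set. -/
def Matroid.Cct (M : Matroid α) (C : Set α) : Prop :=
  M.Dep C ∧ ∀ D ⊂ C, ¬ M.Dep D

/-- The externally active elements with respect to `S`: elements `e ∈ E \ S` that are the
maximum of some circuit contained in `S ∪ {e}`. -/
def Matroid.exA [LinearOrder α] (M : Matroid α) (S : Set α) : Set α :=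
  {e | e ∈ M.E \ S ∧ ∃ C, M.Cct C ∧ C ⊆ insert e S ∧ ∀ f ∈ C, f ≤ e}

/-- The externally passive elements with respect to `S`. -/
def Matroid.exP [LinearOrder α] (M : Matroid α) (S : Set α) : Set α :=
  (M.E \ S) \ M.exA S

/-- The internally active elements with respect to `S`: elements of `S` that are externally
active with respect to `E \ S` in the dual matroid. -/
def Matroid.inA [LinearOrder α] (M : Matroid α) (S : Set α) : Set α :=
  {i | i ∈ S ∧ i ∈ M✶.exA (M.E \ S)}

/-- The internally passive elements with respect to `S`. -/
def Matroid.inP [LinearOrder α] (M : Matroid α) (S : Set α) : Set α :=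
  S \ M.inA S

/-- `I` is internally related to the basis `B` if `I = B \ Y` for some `Y ⊆ IA(B)`. -/
def Matroid.IntRelated [LinearOrder α] (M : Matroid α) (I B : Set α) : Prop :=
  M.IsBase B ∧ ∃ Y ⊆ M.inA B, I = B \ Y

/-- The external/internal order on independent sets. -/
def Matroid.extIntLE [LinearOrder α] (M : Matroid α) (I J : Set α) : Prop :=
  ((∃ B, M.IntRelated I B ∧ M.IntRelated J B) ∧ I ⊆ J) ∨
  ((¬ ∃ B, M.IntRelated I B ∧ M.IntRelated J B) ∧
    (I \ M.inA I) ∪ M.exA I ⊆ (J \ M.inA J) ∪ M.exA J)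

/-- Every dependent set in a finite matroid contains a circuit. -/
lemma exists_cct_of_dep_aux (M : Matroid α) [M.Finite] :
    ∀ n (X : Set α), X.ncard ≤ n → M.Dep X → ∃ Γ, M.Cct Γ ∧ Γ ⊆ X := by
  intro n
  induction n with
  | zero =>
    intro X hn hX
    have hfin : X.Finite := M.ground_finite.subset hX.subset_ground
    have : X = ∅ := by
      rw [← Set.ncard_eq_zero hfin]; omega
    exact absurd (this ▸ hX.nonempty) (by simp)
  | succ n ih =>
    intro X hn hX
    by_cases hmin : ∀ D ⊂ X, ¬ M.Dep D
    · exact ⟨X, ⟨hX, hmin⟩, subset_rfl⟩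
    · push_neg at hmin
      obtain ⟨D, hDX, hDdep⟩ := hmin
      have hfin : X.Finite := M.ground_finite.subset hX.subset_ground
      obtain ⟨Γ, h1, h2⟩ := ih D (by have := Set.ncard_lt_ncard hDX hfin; omega) hDdep
      exact ⟨Γ, h1, h2.trans hDX.subset⟩

lemma exists_cct_of_dep {M : Matroid α} [M.Finite] {X : Set α} (hX : M.Dep X) :
    ∃ Γ, M.Cct Γ ∧ Γ ⊆ X :=
  exists_cct_of_dep_aux M X.ncard X le_rfl hX

/-- A circuit inside `insert e I` with `I` independent must contain `e`. -/
lemma Matroid.Cct.mem_insert {M : Matroid α} {Γ I : Set α} {e : α} (hΓ : M.Cct Γ)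
    (hsub : Γ ⊆ insert e I) (hI : M.Indep I) : e ∈ Γ := by
  by_contra he
  exact hΓ.1.not_indep (hI.subset (fun y hy => ((hsub hy).resolve_left
    (fun h => he (h ▸ hy)))))

lemma Matroid.Cct.diff_indep {M : Matroid α} {Γ : Set α} {x : α} (hΓ : M.Cct Γ) (hx : x ∈ Γ) :
    M.Indep (Γ \ {x}) := by
  have hss : Γ \ {x} ⊂ Γ := Set.sdiff_singleton_ssubset.mpr hx
  exact Matroid.indep_of_not_dep (hΓ.2 _ hss) ((Set.diff_subset).trans hΓ.1.subset_ground)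

lemma Matroid.Cct.mem_closure_diff {M : Matroid α} {Γ : Set α} {x : α} (hΓ : M.Cct Γ)
    (hx : x ∈ Γ) : x ∈ M.closure (Γ \ {x}) := by
  have hind := hΓ.diff_indep hx
  have hdep : M.Dep (insert x (Γ \ {x})) := by
    rw [Set.insert_diff_singleton, Set.insert_eq_self.mpr hx]
    exact hΓ.1
  exact (hind.insert_dep_iff.mp hdep).1

/-- A circuit and a cocircuit cannot intersect in exactly one element. -/
lemma cct_cocct_inter {M : Matroid α} [M.Finite] {Γ D : Set α} {x : α}
    (hΓ : M.Cct Γ) (hD : M✶.Cct D) (hxΓ : x ∈ Γ) (hxD : x ∈ D) :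
    ∃ y, y ∈ Γ ∧ y ∈ D ∧ y ≠ x := by
  by_contra hcon
  push_neg at hcon
  have hΓE : Γ ⊆ M.E := hΓ.1.subset_ground
  have hDE : D ⊆ M.E := hD.1.subset_ground
  have hxcl : x ∈ M.closure (Γ \ {x}) := hΓ.mem_closure_diff hxΓ
  -- get a base of M disjoint from D \ {x}
  have hDx_indep : M✶.Indep (D \ {x}) :=
    Matroid.indep_of_not_dep (hD.2 _ (Set.sdiff_singleton_ssubset.mpr hxD))
      ((Set.diff_subset).trans hDE)
  obtain ⟨Bb, hBb, hdisj⟩ :=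
    (Matroid.dual_indep_iff_exists ((Set.diff_subset).trans hDE)).mp hDx_indep
  have hmeet : ∀ B', M.IsBase B' → (D ∩ B').Nonempty :=
    (Matroid.dual_dep_iff_forall.mp hD.1).1
  have hxBb : x ∈ Bb := by
    obtain ⟨z, hzD, hzB⟩ := hmeet Bb hBb
    by_contra hx'
    exact hdisj.ne_of_mem ⟨hzD, fun h => hx' (h ▸ hzB)⟩ hzB rfl
  have hBbE : Bb ⊆ M.E := hBb.subset_ground
  -- every element of E \ D lies in the closure of Bb \ {x}
  have key : M.E \ D ⊆ M.closure (Bb \ {x}) := by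
    intro y hy
    by_contra hycl
    have hyB : y ∉ Bb \ {x} := fun h =>
      hycl (M.mem_closure_of_mem h ((Set.diff_subset).trans hBbE))
    have hind : M.Indep (insert y (Bb \ {x})) := by
      rw [Matroid.insert_indep_iff]
      exact ⟨hBb.indep.diff _, fun _ => ⟨hy.1, hycl⟩⟩
    obtain ⟨B₃, hB₃, hsub₃⟩ := hind.exists_isBase_superset
    have hcard : (insert y (Bb \ {x})).encard = Bb.encard := by
      rw [Set.encard_insert_of_notMem hyB, Set.encard_diff_singleton_add_one hxBb]
    have hB₃fin : B₃.Finite := M.ground_finite.subset hB₃.subset_ground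
    have hB₃eq : insert y (Bb \ {x}) = B₃ :=
      hB₃fin.eq_of_subset_of_encard_le' hsub₃
        (by rw [hcard, hB₃.encard_eq_encard_of_isBase hBb])
    obtain ⟨z, hzD, hzB⟩ := hmeet B₃ hB₃
    rw [← hB₃eq] at hzB
    rcases hzB with rfl | hzB
    · exact hy.2 hzD
    · exact hdisj.ne_of_mem ⟨hzD, hzB.2⟩ hzB.1 rfl
  -- conclude x ∈ closure (Bb \ {x}), contradicting independence of Bb
  have hΓD : Γ \ {x} ⊆ M.E \ D := fun y hy =>
    ⟨hΓE hy.1, fun hyD => hy.2 (hcon y hy.1 hyD)⟩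
  have hx2 : x ∈ M.closure (Bb \ {x}) :=
    (Matroid.closure_subset_closure_of_subset_closure (hΓD.trans key)) hxcl
  exact ((Matroid.indep_iff_forall_notMem_closure_diff hBbE).mp hBb.indep) hxBb hx2

/-- If `B = (C \ {c}) ∪ {b}` is a basis below `C` in the external/internal order with
`c ∈ EP(B)` and `EA(C) ⊆ EA(B) ∪ {b}`, then `IA(C) ⊆ IA(B)`. -/
theorem inA_subset_of_exchange [LinearOrder α] (M : Matroid α) [M.Finite]
    (A B C : Set α) (b c : α) (hA : M.IsBase A) (hB : M.IsBase B) (hC : M.IsBase C)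
    (hbc : b ≠ c) (hBdef : B = insert b (C \ {c}))
    (hle : M.extIntLE B C) (hcEP : c ∈ M.exP B)
    (hEA : M.exA C ⊆ M.exA B ∪ {b}) :
    M.inA C ⊆ M.inA B := by
  by_cases hBC : B = C
  · rw [hBC]
  -- basic set facts
  have hbB : b ∈ B := hBdef ▸ Set.mem_insert _ _
  have hbC : b ∉ C := by
    intro hb
    exact hBC (hB.eq_of_subset_isBase hC (hBdef ▸ Set.insert_subset hb Set.diff_subset))
  have hcC : c ∈ C := by
    by_contra hc
    refine hBC ((hC.eq_of_subset_isBase hB ?_).symm)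
    rw [hBdef]
    exact fun y hy => Set.mem_insert_of_mem _ ⟨hy, fun h => hc (h ▸ hy)⟩
  have hcB : c ∉ B := by
    rw [hBdef]
    rintro (h | h)
    · exact hbc h.symm
    · exact h.2 rfl
  have hcE : c ∈ M.E := hC.subset_ground hcC
  have hCE : C ⊆ M.E := hC.subset_ground
  have hBE : B ⊆ M.E := hB.subset_ground
  -- extract the second disjunct of hle
  have hsub : (B \ M.inA B) ∪ M.exA B ⊆ (C \ M.inA C) ∪ M.exA C := by
    rcases hle with ⟨⟨Dd, ⟨hDbase, Y, _, hBY⟩, ⟨_, Z, _, hCZ⟩⟩, _⟩ | ⟨_, h⟩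
    · exact absurd ((hB.eq_of_subset_isBase hDbase (hBY ▸ Set.diff_subset)).trans
        (hC.eq_of_subset_isBase hDbase (hCZ ▸ Set.diff_subset)).symm) hBC
    · exact h
  -- a circuit Γ ⊆ insert c B
  obtain ⟨Γ, hΓ, hΓsub⟩ := exists_cct_of_dep (hB.insert_dep ⟨hcE, hcB⟩)
  have hcΓ : c ∈ Γ := hΓ.mem_insert hΓsub hB.indep
  have hCdualB : M✶.IsBase (M.E \ C) := hC.compl_isBase_dual
  have hBdualB : M✶.IsBase (M.E \ B) := hB.compl_isBase_dual
  -- key claim : c is not internally active in C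
  have hcIA : c ∉ M.inA C := by
    rintro ⟨-, -, D, hD, hDsub, hDle⟩
    have hcD : c ∈ D := hD.mem_insert hDsub hCdualB.indep
    -- the circuit Γ and cocircuit D meet in a second element, which must be b
    obtain ⟨y, hyΓ, hyD, hyc⟩ := cct_cocct_inter hΓ hD hcΓ hcD
    have hyB : y ∈ B := (hΓsub hyΓ).resolve_left hyc
    have hyb : y = b := by
      rcases (hDsub hyD) with h | h
      · exact absurd h hyc
      · rw [hBdef] at hyB
        rcases hyB with h' | h'
        · exact h'
        · exact absurd h'.1 h.2
    rw [hyb] at hyΓ hyD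
    have hblt : b < c := lt_of_le_of_ne (hDle b hyD) hbc
    -- b is internally passive in B
    have hbIP : b ∉ M.inA B := by
      rintro ⟨-, -, D', hD', hD'sub, hD'le⟩
      have hbD' : b ∈ D' := hD'.mem_insert hD'sub hBdualB.indep
      obtain ⟨z, hzΓ, hzD', hzb⟩ := cct_cocct_inter hΓ hD' hyΓ hbD'
      rcases hΓsub hzΓ with h | h
      · subst h
        exact absurd (hD'le _ hzD') (not_le.mpr hblt)
      · rcases hD'sub hzD' with h' | h'
        · exact hzb h'
        · exact h'.2 h
    -- hence by hle, b is externally active in C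
    have hbEA : b ∈ M.exA C := by
      have := hsub (Set.mem_union_left _ ⟨hbB, hbIP⟩)
      rcases this with h | h
      · exact absurd h.1 hbC
      · exact h
    -- but no circuit in C ∪ {b} has maximum b : it would meet D only in b
    obtain ⟨-, Γ', hΓ', hΓ'sub, hΓ'le⟩ := hbEA
    have hbΓ' : b ∈ Γ' := hΓ'.mem_insert hΓ'sub hC.indep
    obtain ⟨z, hzΓ', hzD, hzb⟩ := cct_cocct_inter hΓ' hD hbΓ' hyD
    rcases hDsub hzD with h | h
    · subst h
      exact absurd (hΓ'le _ hzΓ') (not_le.mpr hblt)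
    · rcases hΓ'sub hzΓ' with h' | h'
      · exact hzb h'
      · exact h.2 h'
  -- now the main inclusion
  intro x hx
  have hxC : x ∈ C := hx.1
  have hxc : x ≠ c := fun h => hcIA (h ▸ hx)
  have hxB : x ∈ B := hBdef ▸ Set.mem_insert_of_mem _ ⟨hxC, hxc⟩
  by_contra hxIA
  have := hsub (Set.mem_union_left _ ⟨hxB, hxIA⟩)
  rcases this with h | h
  · exact h.2 hx
  · exact h.1.2 hxC
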